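/- Let w be a (u,v)-walk with no unbalanced vertex term in a signed graph, and let w₁, w₂ be (v,u)-walks such that w + w₁ and w + w₂ are both even closed walks. Then w₁ + w₂⁻¹ is an even closed walk and its associated binomial B_{w₁ + w₂⁻¹} lies in the ideal generated by B_{w + w₁} and B_{w + w₂} in the polynomial ring K[e : e ∈ E(G)]. -/

import Mathlib

variable {V : Type*}

/-- The product of τ(e,u)·τ(e,v) over all edge terms e = uv of a walk in a signed
graph (G,τ), where the sign τ assigns a unit ±1 to each incidence. -/
def walkSign (G : SimpleGraph V) (τ : Sym2 V → V → ℤˣ) :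
    {u v : V} → G.Walk u v → ℤˣ
  | _, _, SimpleGraph.Walk.nil => 1
  | _, _, @SimpleGraph.Walk.cons _ _ a b _ _ p =>
      τ s(a, b) a * τ s(a, b) b * walkSign G τ p

/-- μ of a closed walk: (-1)^(number of unbalanced vertex terms). -/
def mu (G : SimpleGraph V) (τ : Sym2 V → V → ℤˣ) {u v : V} (w : G.Walk u v) : ℤˣ :=
  (-1) ^ w.length * walkSign G τ w

/-- The i-th dart (oriented edge term) of a walk. -/
def dartAt {G : SimpleGraph V} {u v : V} (w : G.Walk u v) (i : Fin w.length) :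
    G.Dart :=
  w.darts.get (Fin.cast w.length_darts.symm i)

/-- Cyclic successor on `Fin n`. -/
def csucc {n : ℕ} (i : Fin n) : Fin n := ⟨(i + 1) % n, Nat.mod_lt _ i.pos⟩

/-- `FlipRel G τ w κ`: κ assigns a sign ±1 to each edge term of the closed walk w,
flipping exactly at the unbalanced vertex terms (cyclically).  Such a κ records (up
to a global sign) the parity of the balanced section containing each edge term in the
balanced section-decomposition of w, and a κ satisfying this relation exists iff w is
even. -/
def FlipRel (G : SimpleGraph V) (τ : Sym2 V → V → ℤˣ) {v : V} (w : G.Walk v v)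
    (κ : Fin w.length → ℤˣ) : Prop :=
  ∀ i : Fin w.length,
    κ (csucc i) =
      -(τ (dartAt w i).edge (dartAt w i).toProd.2 *
          τ (dartAt w (csucc i)).edge (dartAt w i).toProd.2) * κ i

open MvPolynomial in
/-- The positive monomial B_w⁺ of the binomial associated with an even closed walk w,
relative to the section-parity assignment κ: the product of all edge terms lying in
the sections with κ = 1. -/
noncomputable def Bpos (K : Type*) [Field K] {G : SimpleGraph V} {v : V}
    (w : G.Walk v v) (κ : Fin w.length → ℤˣ) : MvPolynomial G.edgeSet K :=
  ∏ i ∈ Finset.univ.filter (fun i => κ i = 1),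
    X (⟨(dartAt w i).edge, (dartAt w i).edge_mem⟩ : G.edgeSet)

open MvPolynomial in
/-- The negative monomial B_w⁻: the product of all edge terms in sections with κ = -1. -/
noncomputable def Bneg (K : Type*) [Field K] {G : SimpleGraph V} {v : V}
    (w : G.Walk v v) (κ : Fin w.length → ℤˣ) : MvPolynomial G.edgeSet K :=
  ∏ i ∈ Finset.univ.filter (fun i => κ i = -1),
    X (⟨(dartAt w i).edge, (dartAt w i).edge_mem⟩ : G.edgeSet)

open MvPolynomial in
/-- The toric ideal I_{(G,τ)} of a signed graph: the ideal of K[e : e ∈ E(G)]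
generated by the binomials e^{b⁺} - e^{b⁻} over integer vectors b in the kernel of
the incidence matrix A(G,τ). -/
noncomputable def toricIdeal (K : Type*) [Field K] [DecidableEq V]
    (G : SimpleGraph V) [Fintype G.edgeSet] (τ : Sym2 V → V → ℤˣ) :
    Ideal (MvPolynomial G.edgeSet K) :=
  Ideal.span { f | ∃ b : G.edgeSet → ℤ,
    (∀ v : V, ∑ e : G.edgeSet,
      (if v ∈ (e : Sym2 V) then (τ e v : ℤ) else 0) * b e = 0) ∧
    f = (∏ e : G.edgeSet, X e ^ (b e).toNat)
      - ∏ e : G.edgeSet, X e ^ (-(b e)).toNat }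


section Aux
open MvPolynomial
variable {G : SimpleGraph V} {τ : Sym2 V → V → ℤˣ}

lemma walkSign_append {x y z : V} (p : G.Walk x y) (q : G.Walk y z) :
    walkSign G τ (p.append q) = walkSign G τ p * walkSign G τ q := by
  induction p with
  | nil => simp [walkSign]
  | cons h p ih => simp [walkSign, ih, mul_assoc]

lemma walkSign_reverse {x y : V} (p : G.Walk x y) :
    walkSign G τ p.reverse = walkSign G τ p := by
  induction p with
  | nil => rfl
  | @cons a b _ h p ih =>
      rw [SimpleGraph.Walk.reverse_cons, walkSign_append, ih]
      simp [walkSign, Sym2.eq_swap (a := a) (b := b), mul_comm, mul_assoc, mul_left_comm]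

lemma mu_part1 {u v : V} (w : G.Walk u v) (w₁ w₂ : G.Walk v u)
    (h1 : mu G τ (w.append w₁) = 1) (h2 : mu G τ (w.append w₂) = 1) :
    mu G τ (w₁.append w₂.reverse) = 1 := by
  have key : mu G τ (w₁.append w₂.reverse) = mu G τ (w.append w₁) * mu G τ (w.append w₂) := by
    unfold mu
    rw [walkSign_append, walkSign_append, walkSign_append, walkSign_reverse]
    simp only [SimpleGraph.Walk.length_append, SimpleGraph.Walk.length_reverse]
    generalize walkSign G τ w = s0
    generalize walkSign G τ w₁ = s1
    generalize walkSign G τ w₂ = s2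
    rw [pow_add, pow_add, pow_add]
    generalize ((-1:ℤˣ) ^ w.length) = p
    generalize ((-1:ℤˣ) ^ w₁.length) = q
    generalize ((-1:ℤˣ) ^ w₂.length) = r
    revert p q r s0 s1 s2
    decide
  rw [key, h1, h2, mul_one]

noncomputable def edgeVar (K : Type*) [Field K] {G : SimpleGraph V} (d : G.Dart) :
    MvPolynomial G.edgeSet K := X ⟨d.edge, d.edge_mem⟩

noncomputable def mono (K : Type*) [Field K] {G : SimpleGraph V} (L : List G.Dart)
    (κ : ℕ → ℤˣ) (s : ℤˣ) : MvPolynomial G.edgeSet K :=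
  ∏ i : Fin L.length, if κ i = s then edgeVar K (L.get i) else 1

variable (K : Type*) [Field K]

lemma mono_nil (κ : ℕ → ℤˣ) (s : ℤˣ) : mono K ([] : List G.Dart) κ s = 1 := by
  simp [mono]

lemma mono_cons (d : G.Dart) (L : List G.Dart) (κ : ℕ → ℤˣ) (s : ℤˣ) :
    mono K (d :: L) κ s
      = (if κ 0 = s then edgeVar K d else 1) * mono K L (fun i => κ (i+1)) s := by
  unfold mono
  exact Fin.prod_univ_succ _

lemma mono_congr {L : List G.Dart} {κ κ' : ℕ → ℤˣ} (s : ℤˣ)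
    (h : ∀ i < L.length, κ i = κ' i) : mono K L κ s = mono K L κ' s := by
  unfold mono
  exact Finset.prod_congr rfl fun i _ => by rw [h i i.isLt]

lemma mono_append (L₁ L₂ : List G.Dart) (κ : ℕ → ℤˣ) (s : ℤˣ) :
    mono K (L₁ ++ L₂) κ s
      = mono K L₁ κ s * mono K L₂ (fun i => κ (L₁.length + i)) s := by
  induction L₁ generalizing κ with
  | nil => simp [mono_nil]
  | cons d L ih =>
      rw [List.cons_append, mono_cons, mono_cons, ih, mul_assoc]
      congr 2
      apply mono_congr; intro i _; congr 1; simp; omega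

lemma mono_smul (L : List G.Dart) (κ : ℕ → ℤˣ) (t s : ℤˣ) :
    mono K L (fun i => t * κ i) s = mono K L κ (t * s) := by
  unfold mono
  refine Finset.prod_congr rfl fun i _ => ?_
  apply if_congr ?_ rfl rfl
  have : ∀ a b c : ℤˣ, (a*b = c) ↔ (b = a*c) := by decide
  exact this t (κ i) s

lemma mono_const (L : List G.Dart) (t s : ℤˣ) :
    mono K L (fun _ => t) s
      = if t = s then ∏ i : Fin L.length, edgeVar K (L.get i) else 1 := by
  unfold mono
  split_ifs with h <;> simp [h]

lemma mono_reverse (L : List G.Dart) (κ : ℕ → ℤˣ) (s : ℤˣ) :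
    mono K (L.map SimpleGraph.Dart.symm).reverse κ s
      = mono K L (fun i => κ (L.length - 1 - i)) s := by
  unfold mono
  have hlen : (L.map SimpleGraph.Dart.symm).reverse.length = L.length := by simp
  refine Fintype.prod_equiv ((finCongr hlen).trans (Fin.revPerm)) _ _ fun i => ?_
  have hv : ((Fin.revPerm (finCongr hlen i)) : ℕ) = L.length - 1 - (i : ℕ) := by
    simp [Fin.rev]; omega
  simp only [Equiv.trans_apply] at *
  simp only [hv]
  have h1 : (L.map SimpleGraph.Dart.symm).reverse.get i
      = (L.get ⟨L.length - 1 - (i:ℕ), by have := i.isLt; omega⟩).symm := by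
    rw [List.get_eq_getElem, List.getElem_reverse]
    simp only [List.getElem_map, List.get_eq_getElem]
    congr 1
    simp
  have h2 : κ (L.length - 1 - (L.length - 1 - (i:ℕ))) = κ i := by
    congr 1; have := i.isLt; simp at this ⊢; omega
  rw [h2, h1]
  congr 1
  simp only [edgeVar]
  have key : ∀ (a b : ℕ) (ha : a < L.length) (hb : b < L.length), a = b →
      (X (⟨(L[a]'ha).symm.edge, ((L[a]'ha).symm).edge_mem⟩ : G.edgeSet) : MvPolynomial G.edgeSet K)
        = X ⟨(L[b]'hb).edge, (L[b]'hb).edge_mem⟩ := by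
    rintro a b ha hb rfl
    congr 1
    exact Subtype.ext (by simp)
  exact key _ _ _ _ (by have hfc : ((finCongr hlen) i : ℕ) = (i:ℕ) := rfl; omega)


/-- Extension of a `Fin`-indexed sign assignment to ℕ. -/
def extendK {x : V} (a : G.Walk x x) (κ : Fin a.length → ℤˣ) : ℕ → ℤˣ :=
  fun i => if h : i < a.length then κ ⟨i, h⟩ else 1

lemma length_darts' {x y : V} (p : G.Walk x y) : p.darts.length = p.length :=
  p.length_darts

lemma flip_step {x : V} {a : G.Walk x x} {κ : Fin a.length → ℤˣ}
    (h : FlipRel G τ a κ) (i : ℕ) (hi : i + 1 < a.length) :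
    extendK a κ (i+1) =
      -(τ (a.darts.get ⟨i, by rw [length_darts']; omega⟩).edge
          (a.darts.get ⟨i, by rw [length_darts']; omega⟩).toProd.2 *
        τ (a.darts.get ⟨i+1, by rw [length_darts']; omega⟩).edge
          (a.darts.get ⟨i, by rw [length_darts']; omega⟩).toProd.2) *
      extendK a κ i := by
  have h0 : i < a.length := by omega
  have hcs : csucc (⟨i, h0⟩ : Fin a.length) = ⟨i+1, hi⟩ := by
    apply Fin.ext
    show (i + 1) % a.length = i + 1
    exact Nat.mod_eq_of_lt hi
  have := h ⟨i, h0⟩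
  rw [hcs] at this
  have e1 : extendK a κ (i+1) = κ ⟨i+1, hi⟩ := by simp [extendK, hi]
  have e2 : extendK a κ i = κ ⟨i, h0⟩ := by simp [extendK, h0]
  rw [e1, e2, this]
  rfl

lemma flip_wrap {x : V} {a : G.Walk x x} {κ : Fin a.length → ℤˣ}
    (h : FlipRel G τ a κ) (hn : 0 < a.length) :
    extendK a κ 0 =
      -(τ (a.darts.get ⟨a.length - 1, by rw [length_darts']; omega⟩).edge
          (a.darts.get ⟨a.length - 1, by rw [length_darts']; omega⟩).toProd.2 *
        τ (a.darts.get ⟨0, by rw [length_darts']; omega⟩).edge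
          (a.darts.get ⟨a.length - 1, by rw [length_darts']; omega⟩).toProd.2) *
      extendK a κ (a.length - 1) := by
  have h0 : a.length - 1 < a.length := by omega
  have hcs : csucc (⟨a.length - 1, h0⟩ : Fin a.length) = ⟨0, hn⟩ := by
    apply Fin.ext
    show (a.length - 1 + 1) % a.length = 0
    rw [Nat.sub_add_cancel hn, Nat.mod_self]
  have := h ⟨a.length - 1, h0⟩
  rw [hcs] at this
  have e1 : extendK a κ 0 = κ ⟨0, hn⟩ := by simp [extendK, hn]
  have e2 : extendK a κ (a.length - 1) = κ ⟨a.length - 1, h0⟩ := by simp [extendK, h0]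
  rw [e1, e2, this]
  rfl

lemma Bpos_eq_mono {x : V} (a : G.Walk x x) (κ : Fin a.length → ℤˣ) :
    Bpos K a κ = mono K a.darts (extendK a κ) 1 := by
  unfold Bpos mono
  rw [Finset.prod_filter]
  refine Fintype.prod_equiv (finCongr (length_darts' a).symm) _ _ fun i => ?_
  have hi : (i : ℕ) < a.length := i.isLt
  have he : extendK a κ ((finCongr (length_darts' a).symm i : Fin _) : ℕ) = κ i := by
    simp [extendK, hi]
  rw [he]
  rfl

lemma Bneg_eq_mono {x : V} (a : G.Walk x x) (κ : Fin a.length → ℤˣ) :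
    Bneg K a κ = mono K a.darts (extendK a κ) (-1) := by
  unfold Bneg mono
  rw [Finset.prod_filter]
  refine Fintype.prod_equiv (finCongr (length_darts' a).symm) _ _ fun i => ?_
  have hi : (i : ℕ) < a.length := i.isLt
  have he : extendK a κ ((finCongr (length_darts' a).symm i : Fin _) : ℕ) = κ i := by
    simp [extendK, hi]
  rw [he]
  rfl

lemma last_dart_snd : ∀ {x y : V} (p : G.Walk x y) (i : ℕ) (h : i < p.darts.length),
    i + 1 = p.darts.length → (p.darts.get ⟨i, h⟩).toProd.2 = y := by
  intro x y p
  induction p with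
  | nil => intro i h _; simp at h
  | @cons a b c adj p ih =>
      intro i h hlen
      simp only [SimpleGraph.Walk.darts_cons] at h hlen ⊢
      match i with
      | 0 =>
          have hp : p.darts.length = 0 := by simp only [List.length_cons] at hlen; omega
          have hp' : p.length = 0 := by rw [← length_darts']; exact hp
          have hbc : b = c := SimpleGraph.Walk.eq_of_length_eq_zero hp'
          subst hbc
          rfl
      | Nat.succ k =>
          rw [List.get_cons_succ]
          exact ih k _ (by simp only [List.length_cons] at hlen; omega)

/-- A product sequence satisfying a transfer recurrence is constant. -/
lemma seq_prod (N : ℕ) (f g : ℕ → ℤˣ)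
    (h : ∀ i, i + 1 < N → f (i+1) * g (i+1) = f i * g i) :
    ∀ i < N, f i * g i = f 0 * g 0 := by
  intro i
  induction i with
  | zero => intro _; rfl
  | succ k ih =>
      intro hk
      rw [h k hk]
      exact ih (by omega)

end Aux

set_option maxHeartbeats 2000000 in
/-- Let w be a (u,v)-walk with no unbalanced (internal) vertex term,
and let w₁, w₂ be (v,u)-walks such that w + w₁ and w + w₂ are even closed walks.
Then w₁ + w₂⁻¹ is an even closed walk and its associated binomial lies in the ideal
generated by B_{w+w₁} and B_{w+w₂} (each binomial being defined up to sign via a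
section-parity assignment κ). -/
theorem binomial_in_span_of_balanced_mid [DecidableEq V] (K : Type*) [Field K]
    (G : SimpleGraph V) [Fintype G.edgeSet] (τ : Sym2 V → V → ℤˣ) (u v : V)
    (w : G.Walk u v)
    -- w has no unbalanced (internal) vertex term:
    (hbal : ∀ (i : ℕ) (h1 : i + 1 < w.darts.length),
      τ (w.darts.get ⟨i, Nat.lt_of_succ_lt h1⟩).edge
          (w.darts.get ⟨i, Nat.lt_of_succ_lt h1⟩).toProd.2 *
        τ (w.darts.get ⟨i + 1, h1⟩).edge
          (w.darts.get ⟨i, Nat.lt_of_succ_lt h1⟩).toProd.2 = -1)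
    (w₁ w₂ : G.Walk v u)
    (h1 : mu G τ (w.append w₁) = 1) (h2 : mu G τ (w.append w₂) = 1) :
    mu G τ (w₁.append w₂.reverse) = 1 ∧
    ∀ (κa : Fin (w.append w₁).length → ℤˣ) (κb : Fin (w.append w₂).length → ℤˣ)
      (κc : Fin (w₁.append w₂.reverse).length → ℤˣ),
      FlipRel G τ (w.append w₁) κa → FlipRel G τ (w.append w₂) κb →
      FlipRel G τ (w₁.append w₂.reverse) κc →
      Bpos K (w₁.append w₂.reverse) κc - Bneg K (w₁.append w₂.reverse) κc ∈
        Ideal.span {Bpos K (w.append w₁) κa - Bneg K (w.append w₁) κa,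
                    Bpos K (w.append w₂) κb - Bneg K (w.append w₂) κb} := by
  classical
  refine ⟨mu_part1 w w₁ w₂ h1 h2, ?_⟩
  intro κa κb κc hfa hfb hfc
  have hDl : w.darts.length = w.length := length_darts' w
  have hE1l : w₁.darts.length = w₁.length := length_darts' w₁
  have hE2l : w₂.darts.length = w₂.length := length_darts' w₂
  have hla : (w.append w₁).length = w.length + w₁.length := SimpleGraph.Walk.length_append w w₁
  have hlb : (w.append w₂).length = w.length + w₂.length := SimpleGraph.Walk.length_append w w₂
  have hlc : (w₁.append w₂.reverse).length = w₁.length + w₂.length := by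
    rw [SimpleGraph.Walk.length_append, SimpleGraph.Walk.length_reverse]
  have hda : (w.append w₁).darts = w.darts ++ w₁.darts := SimpleGraph.Walk.darts_append w w₁
  have hdb : (w.append w₂).darts = w.darts ++ w₂.darts := SimpleGraph.Walk.darts_append w w₂
  have hdc : (w₁.append w₂.reverse).darts = w₁.darts ++ (w₂.darts.map SimpleGraph.Dart.symm).reverse := by
    rw [SimpleGraph.Walk.darts_append, SimpleGraph.Walk.darts_reverse]
  have hadl : (w.append w₁).darts.length = w.length + w₁.length := by rw [length_darts', hla]
  have hbdl : (w.append w₂).darts.length = w.length + w₂.length := by rw [length_darts', hlb]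
  have hcdl : (w₁.append w₂.reverse).darts.length = w₁.length + w₂.length := by rw [length_darts', hlc]
  have gcast : ∀ (L : List G.Dart) (a b : ℕ) (ha : a < L.length) (hb : b < L.length),
      a = b → L.get ⟨a, ha⟩ = L.get ⟨b, hb⟩ := by rintro L a b ha hb rfl; rfl
  have gaD : ∀ (k : ℕ) (h : k < (w.append w₁).darts.length) (h' : k < w.darts.length),
      (w.append w₁).darts.get ⟨k, h⟩ = w.darts.get ⟨k, h'⟩ := by
    intro k h h'
    simp only [List.get_eq_getElem, hda]
    exact List.getElem_append_left h'
  have gbD : ∀ (k : ℕ) (h : k < (w.append w₂).darts.length) (h' : k < w.darts.length),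
      (w.append w₂).darts.get ⟨k, h⟩ = w.darts.get ⟨k, h'⟩ := by
    intro k h h'
    simp only [List.get_eq_getElem, hdb]
    exact List.getElem_append_left h'
  have gcE1 : ∀ (k : ℕ) (h : k < (w₁.append w₂.reverse).darts.length) (h' : k < w₁.darts.length),
      (w₁.append w₂.reverse).darts.get ⟨k, h⟩ = w₁.darts.get ⟨k, h'⟩ := by
    intro k h h'
    simp only [List.get_eq_getElem, hdc]
    exact List.getElem_append_left h'
  have gaE : ∀ (k i : ℕ), k = w.length + i → ∀ (h : k < (w.append w₁).darts.length)
      (h' : i < w₁.darts.length),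
      (w.append w₁).darts.get ⟨k, h⟩ = w₁.darts.get ⟨i, h'⟩ := by
    intro k i hk h h'
    simp only [List.get_eq_getElem, hda]
    rw [List.getElem_append_right (by omega)]
    exact gcast _ _ _ _ _ (by omega)
  have gbE : ∀ (k i : ℕ), k = w.length + i → ∀ (h : k < (w.append w₂).darts.length)
      (h' : i < w₂.darts.length),
      (w.append w₂).darts.get ⟨k, h⟩ = w₂.darts.get ⟨i, h'⟩ := by
    intro k i hk h h'
    simp only [List.get_eq_getElem, hdb]
    rw [List.getElem_append_right (by omega)]
    exact gcast _ _ _ _ _ (by omega)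
  have gcE2 : ∀ (k j : ℕ), k = w₁.length + j → j < w₂.length →
      ∀ (h : k < (w₁.append w₂.reverse).darts.length) (h2 : w₂.length - 1 - j < w₂.darts.length),
      (w₁.append w₂.reverse).darts.get ⟨k, h⟩ = (w₂.darts.get ⟨w₂.length - 1 - j, h2⟩).symm := by
    intro k j hk hj h h2
    simp only [List.get_eq_getElem, hdc]
    rw [List.getElem_append_right (by omega), List.getElem_reverse, List.getElem_map]
    congr 1
    have hml : (List.map SimpleGraph.Dart.symm w₂.darts).length = w₂.darts.length :=
      List.length_map _
    exact gcast _ _ _ _ _ (by omega)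
  have hchain : ∀ (k k' : ℕ), k + 1 = k' → ∀ (h2 : k < w₂.darts.length)
      (h : k' < w₂.darts.length),
      (w₂.darts.get ⟨k, h2⟩).toProd.2 = (w₂.darts.get ⟨k', h⟩).toProd.1 := by
    intro k k' hk h2 h
    subst hk
    exact List.isChain_iff_getElem.mp (SimpleGraph.Walk.isChain_dartAdj_darts w₂) k (by omega)
  -- κa and κb are constant on the darts of w
  have hconsta : ∀ i, i < w.darts.length → extendK (w.append w₁) κa (i) = extendK (w.append w₁) κa (0) := by
    intro i
    induction i with
    | zero => intro _; rfl
    | succ k ih =>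
        intro hk
        have hstep := flip_step hfa k (by omega)
        rw [gaD k (by omega) (by omega), gaD (k+1) (by omega) (by omega)] at hstep
        rw [hbal k (by omega)] at hstep
        rw [hstep, ih (by omega)]
        simp
  have hconstb : ∀ i, i < w.darts.length → extendK (w.append w₂) κb (i) = extendK (w.append w₂) κb (0) := by
    intro i
    induction i with
    | zero => intro _; rfl
    | succ k ih =>
        intro hk
        have hstep := flip_step hfb k (by omega)
        rw [gbD k (by omega) (by omega), gbD (k+1) (by omega) (by omega)] at hstep
        rw [hbal k (by omega)] at hstep
        rw [hstep, ih (by omega)]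
        simp
  -- κc matches κa on the darts of w₁, up to a constant
  have hstep1 : ∀ i, i + 1 < w₁.darts.length →
      extendK (w₁.append w₂.reverse) κc (i+1) * extendK (w.append w₁) κa (w.length + (i+1)) = extendK (w₁.append w₂.reverse) κc (i) * extendK (w.append w₁) κa (w.length + i) := by
    intro i hi
    have s1 := flip_step hfc i (by omega)
    rw [gcE1 i (by omega) (by omega), gcE1 (i+1) (by omega) (by omega)] at s1
    have s2 := flip_step hfa (w.length + i) (by omega)
    rw [gaE (w.length + i) i rfl (by omega) (by omega),
        gaE (w.length + i + 1) (i+1) (by omega) (by omega) (by omega)] at s2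
    rw [show w.length + (i+1) = w.length + i + 1 from rfl]
    rw [s1, s2]
    have hx : ∀ x p q : ℤˣ, (x * p) * (x * q) = p * q := by decide
    exact hx _ _ _
  have hprod1 : ∀ i, i < w₁.darts.length →
      extendK (w₁.append w₂.reverse) κc (i) * extendK (w.append w₁) κa (w.length + i) = extendK (w₁.append w₂.reverse) κc (0) * extendK (w.append w₁) κa (w.length) := by
    intro i hi
    simpa only [Nat.add_zero] using
      seq_prod w₁.darts.length (fun i => extendK (w₁.append w₂.reverse) κc (i))
        (fun i => extendK (w.append w₁) κa (w.length + i)) hstep1 i hi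
  -- κc matches κb reversed on the darts of w₂, up to a constant
  have hstep2 : ∀ j, j + 1 < w₂.length →
      extendK (w₁.append w₂.reverse) κc (w₁.length + (j+1)) * extendK (w.append w₂) κb (w.length + (w₂.length - 1 - (j+1)))
        = extendK (w₁.append w₂.reverse) κc (w₁.length + j) * extendK (w.append w₂) κb (w.length + (w₂.length - 1 - j)) := by
    intro j hj
    have s1 := flip_step hfc (w₁.length + j) (by omega)
    rw [gcE2 (w₁.length + j) j rfl (by omega) (by omega) (by omega),
        gcE2 (w₁.length + j + 1) (j+1) (by omega) (by omega) (by omega) (by omega)] at s1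
    simp only [SimpleGraph.Dart.edge_symm, SimpleGraph.Dart.symm_toProd, Prod.snd_swap] at s1
    rw [← hchain (w₂.length - 1 - (j+1)) (w₂.length - 1 - j) (by omega) (by omega)
        (by omega)] at s1
    have s2 := flip_step hfb (w.length + (w₂.length - 1 - (j+1))) (by omega)
    rw [gbE (w.length + (w₂.length - 1 - (j+1))) (w₂.length - 1 - (j+1)) rfl (by omega)
          (by omega),
        gbE (w.length + (w₂.length - 1 - (j+1)) + 1) (w₂.length - 1 - j) (by omega)
          (by omega) (by omega)] at s2
    rw [show w.length + (w₂.length - 1 - (j+1)) + 1 = w.length + (w₂.length - 1 - j)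
        from by omega] at s2
    rw [show w₁.length + (j+1) = w₁.length + j + 1 from rfl]
    rw [s1, s2]
    have hy : ∀ p q a b : ℤˣ, (-(p * q) * a) * b = a * (-(q * p) * b) := by decide
    exact hy _ _ _ _
  have hprod2 : ∀ j, j < w₂.length →
      extendK (w₁.append w₂.reverse) κc (w₁.length + j) * extendK (w.append w₂) κb (w.length + (w₂.length - 1 - j))
        = extendK (w₁.append w₂.reverse) κc (w₁.length) * extendK (w.append w₂) κb (w.length + (w₂.length - 1)) := by
    intro j hj
    simpa only [Nat.add_zero, Nat.sub_zero] using
      seq_prod w₂.length (fun j => extendK (w₁.append w₂.reverse) κc (w₁.length + j))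
        (fun j => extendK (w.append w₂) κb (w.length + (w₂.length - 1 - j))) hstep2 j hj
  -- the two monomials of B_{w+w₁}
  have hDa : ∀ s, mono K w.darts (extendK (w.append w₁) κa) s = (if extendK (w.append w₁) κa 0 = s then (∏ i : Fin w.darts.length, edgeVar K (w.darts.get i)) else 1) :=
    fun s => (mono_congr K s (fun i hi => hconsta i hi)).trans
      (mono_const K w.darts (extendK (w.append w₁) κa 0) s)
  have hDb : ∀ s, mono K w.darts (extendK (w.append w₂) κb) s = (if extendK (w.append w₂) κb 0 = s then (∏ i : Fin w.darts.length, edgeVar K (w.darts.get i)) else 1) :=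
    fun s => (mono_congr K s (fun i hi => hconstb i hi)).trans
      (mono_const K w.darts (extendK (w.append w₂) κb 0) s)
  have habin : Bpos K (w.append w₁) κa - Bneg K (w.append w₁) κa
      = (if extendK (w.append w₁) κa 0 = 1 then (∏ i : Fin w.darts.length, edgeVar K (w.darts.get i)) else 1) * mono K w₁.darts (fun i => extendK (w.append w₁) κa (w.length + i)) (1)
        - (if extendK (w.append w₁) κa 0 = -1 then (∏ i : Fin w.darts.length, edgeVar K (w.darts.get i)) else 1) * mono K w₁.darts (fun i => extendK (w.append w₁) κa (w.length + i)) (-1) := by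
    rw [Bpos_eq_mono, Bneg_eq_mono, hda, mono_append, mono_append]
    simp only [hDl]
    rw [hDa 1, hDa (-1)]
  have hbbin : Bpos K (w.append w₂) κb - Bneg K (w.append w₂) κb
      = (if extendK (w.append w₂) κb 0 = 1 then (∏ i : Fin w.darts.length, edgeVar K (w.darts.get i)) else 1) * mono K w₂.darts (fun i => extendK (w.append w₂) κb (w.length + i)) (1)
        - (if extendK (w.append w₂) κb 0 = -1 then (∏ i : Fin w.darts.length, edgeVar K (w.darts.get i)) else 1) * mono K w₂.darts (fun i => extendK (w.append w₂) κb (w.length + i)) (-1) := by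
    rw [Bpos_eq_mono, Bneg_eq_mono, hdb, mono_append, mono_append]
    simp only [hDl]
    rw [hDb 1, hDb (-1)]
  -- the two monomials of B_{w₁+w₂⁻¹}
  have hc1 : ∀ s : ℤˣ, mono K w₁.darts (extendK (w₁.append w₂.reverse) κc) s = mono K w₁.darts (fun i => extendK (w.append w₁) κa (w.length + i)) ((extendK (w₁.append w₂.reverse) κc 0 * extendK (w.append w₁) κa w.length) * s) := by
    intro s
    have hcg : ∀ i, i < w₁.darts.length →
        extendK (w₁.append w₂.reverse) κc i = (extendK (w₁.append w₂.reverse) κc 0 * extendK (w.append w₁) κa w.length) * extendK (w.append w₁) κa (w.length + i) := by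
      intro i hi
      have hx : ∀ a b c : ℤˣ, a * b = c → a = c * b := by decide
      exact hx _ _ _ (hprod1 i hi)
    rw [mono_congr K s hcg]
    exact mono_smul K w₁.darts (fun i => extendK (w.append w₁) κa (w.length + i)) (extendK (w₁.append w₂.reverse) κc 0 * extendK (w.append w₁) κa w.length) s
  have hc2 : ∀ s : ℤˣ, mono K (w₂.darts.map SimpleGraph.Dart.symm).reverse
      (fun i => extendK (w₁.append w₂.reverse) κc (w₁.darts.length + i)) s = mono K w₂.darts (fun i => extendK (w.append w₂) κb (w.length + i)) ((extendK (w₁.append w₂.reverse) κc w₁.length * extendK (w.append w₂) κb (w.length + (w₂.length - 1))) * s) := by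
    intro s
    have hrl : (w₂.darts.map SimpleGraph.Dart.symm).reverse.length = w₂.darts.length := by
      simp
    have hcg : ∀ j, j < (w₂.darts.map SimpleGraph.Dart.symm).reverse.length →
        extendK (w₁.append w₂.reverse) κc (w₁.darts.length + j)
          = (extendK (w₁.append w₂.reverse) κc w₁.length * extendK (w.append w₂) κb (w.length + (w₂.length - 1))) * extendK (w.append w₂) κb (w.length + (w₂.length - 1 - j)) := by
      intro j hj
      have hx : ∀ a b c : ℤˣ, a * b = c → a = c * b := by decide
      rw [hE1l]
      exact hx _ _ _ (hprod2 j (by omega))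
    rw [mono_congr K s hcg,
        mono_smul K _ (fun j => extendK (w.append w₂) κb (w.length + (w₂.length - 1 - j))) (extendK (w₁.append w₂.reverse) κc w₁.length * extendK (w.append w₂) κb (w.length + (w₂.length - 1))) s,
        mono_reverse]
    apply mono_congr
    intro i hi
    congr 1
    omega
  have hcbin : Bpos K (w₁.append w₂.reverse) κc - Bneg K (w₁.append w₂.reverse) κc
      = mono K w₁.darts (fun i => extendK (w.append w₁) κa (w.length + i)) ((extendK (w₁.append w₂.reverse) κc 0 * extendK (w.append w₁) κa w.length)) * mono K w₂.darts (fun i => extendK (w.append w₂) κb (w.length + i)) ((extendK (w₁.append w₂.reverse) κc w₁.length * extendK (w.append w₂) κb (w.length + (w₂.length - 1)))) - mono K w₁.darts (fun i => extendK (w.append w₁) κa (w.length + i)) (-(extendK (w₁.append w₂.reverse) κc 0 * extendK (w.append w₁) κa w.length)) * mono K w₂.darts (fun i => extendK (w.append w₂) κb (w.length + i)) (-(extendK (w₁.append w₂.reverse) κc w₁.length * extendK (w.append w₂) κb (w.length + (w₂.length - 1)))) := by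
    rw [Bpos_eq_mono, Bneg_eq_mono, hdc, mono_append, mono_append, hc1 1, hc1 (-1), hc2 1, hc2 (-1)]
    simp only [mul_one, mul_neg_one]
  -- the junction relation, in the main case
  have hJmain : 1 ≤ w.length → 1 ≤ w₁.length → 1 ≤ w₂.length →
      (extendK (w₁.append w₂.reverse) κc w₁.length * extendK (w.append w₂) κb (w.length + (w₂.length - 1))) = -((extendK (w₁.append w₂.reverse) κc 0 * extendK (w.append w₁) κa w.length) * extendK (w.append w₁) κa 0 * extendK (w.append w₂) κb 0) := by
    intro hl1 hm1 hn1
    have s1 := flip_step hfc (w₁.length - 1) (by omega)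
    rw [gcE1 (w₁.length - 1) (by omega) (by omega),
        gcE2 (w₁.length - 1 + 1) 0 (by omega) (by omega) (by omega) (by omega)] at s1
    simp only [SimpleGraph.Dart.edge_symm, Nat.sub_zero] at s1
    rw [last_dart_snd w₁ (w₁.length - 1) (by omega) (by omega)] at s1
    rw [show w₁.length - 1 + 1 = w₁.length from by omega] at s1
    have s2 := flip_wrap hfa (by omega)
    rw [gaE ((w.append w₁).length - 1) (w₁.length - 1) (by omega) (by omega) (by omega),
        gaD 0 (by omega) (by omega)] at s2
    rw [last_dart_snd w₁ (w₁.length - 1) (by omega) (by omega)] at s2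
    rw [show (w.append w₁).length - 1 = w.length + (w₁.length - 1) from by omega] at s2
    have s3 := flip_wrap hfb (by omega)
    rw [gbE ((w.append w₂).length - 1) (w₂.length - 1) (by omega) (by omega) (by omega),
        gbD 0 (by omega) (by omega)] at s3
    rw [last_dart_snd w₂ (w₂.length - 1) (by omega) (by omega)] at s3
    rw [show (w.append w₂).length - 1 = w.length + (w₂.length - 1) from by omega] at s3
    have hp := hprod1 (w₁.length - 1) (by omega)
    rw [show w.length + (w₁.length - 1) = w.length + (w₁.length - 1) from rfl] at hp
    have mainlem : ∀ (p1 p2 p3 cm cm1 a0 alm1 b0 bln1 c0 al : ℤˣ),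
        cm = -(p1 * p2) * cm1 →
        a0 = -(p1 * p3) * alm1 →
        b0 = -(p2 * p3) * bln1 →
        cm1 * alm1 = c0 * al →
        cm * bln1 = -(c0 * al * a0 * b0) := by decide
    exact mainlem _ _ _ _ _ _ _ _ _ _ _ s1 s2 s3 hp
  -- decision helpers for the if-expressions
  have if1 : ∀ x : MvPolynomial G.edgeSet K, (if (1 : ℤˣ) = 1 then x else 1) = x :=
    fun x => if_pos rfl
  have if2 : ∀ x : MvPolynomial G.edgeSet K, (if (1 : ℤˣ) = -1 then x else 1) = 1 :=
    fun x => if_neg (by decide)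
  have if3 : ∀ x : MvPolynomial G.edgeSet K, (if (-1 : ℤˣ) = 1 then x else 1) = 1 :=
    fun x => if_neg (by decide)
  have if4 : ∀ x : MvPolynomial G.edgeSet K, (if (-1 : ℤˣ) = -1 then x else 1) = x :=
    fun x => if_pos rfl
  by_cases hm0 : w₁.length = 0
  · have hE1nil : w₁.darts = [] := List.length_eq_zero_iff.mp (by omega)
    rw [hE1nil] at habin hcbin
    simp only [mono_nil, mul_one, one_mul] at habin hcbin
    rcases Int.units_eq_one_or (extendK (w.append w₁) κa 0) with hea | hea <;>
      rcases Int.units_eq_one_or (extendK (w.append w₂) κb 0) with heb | heb <;>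
      rcases Int.units_eq_one_or ((extendK (w₁.append w₂.reverse) κc w₁.length * extendK (w.append w₂) κb (w.length + (w₂.length - 1)))) with hd2 | hd2
    · rw [hea] at habin; rw [if1, if2] at habin
      rw [heb] at hbbin; rw [if1, if2] at hbbin
      rw [hd2] at hcbin
      rw [Ideal.mem_span_pair]
      exact ⟨(-mono K w₂.darts (fun i => extendK (w.append w₂) κb (w.length + i)) (1)), (1 : MvPolynomial G.edgeSet K), by rw [habin, hbbin, hcbin]; ring⟩
    · rw [hea] at habin; rw [if1, if2] at habin
      rw [heb] at hbbin; rw [if1, if2] at hbbin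
      rw [hd2] at hcbin
      simp only [neg_neg] at hcbin
      rw [Ideal.mem_span_pair]
      exact ⟨mono K w₂.darts (fun i => extendK (w.append w₂) κb (w.length + i)) (1), (-1 : MvPolynomial G.edgeSet K), by rw [habin, hbbin, hcbin]; ring⟩
    · rw [hea] at habin; rw [if1, if2] at habin
      rw [heb] at hbbin; rw [if3, if4] at hbbin
      rw [hd2] at hcbin
      rw [Ideal.mem_span_pair]
      exact ⟨mono K w₂.darts (fun i => extendK (w.append w₂) κb (w.length + i)) (-1), (1 : MvPolynomial G.edgeSet K), by rw [habin, hbbin, hcbin]; ring⟩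
    · rw [hea] at habin; rw [if1, if2] at habin
      rw [heb] at hbbin; rw [if3, if4] at hbbin
      rw [hd2] at hcbin
      simp only [neg_neg] at hcbin
      rw [Ideal.mem_span_pair]
      exact ⟨(-mono K w₂.darts (fun i => extendK (w.append w₂) κb (w.length + i)) (-1)), (-1 : MvPolynomial G.edgeSet K), by rw [habin, hbbin, hcbin]; ring⟩
    · rw [hea] at habin; rw [if3, if4] at habin
      rw [heb] at hbbin; rw [if1, if2] at hbbin
      rw [hd2] at hcbin
      rw [Ideal.mem_span_pair]
      exact ⟨mono K w₂.darts (fun i => extendK (w.append w₂) κb (w.length + i)) (1), (1 : MvPolynomial G.edgeSet K), by rw [habin, hbbin, hcbin]; ring⟩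
    · rw [hea] at habin; rw [if3, if4] at habin
      rw [heb] at hbbin; rw [if1, if2] at hbbin
      rw [hd2] at hcbin
      simp only [neg_neg] at hcbin
      rw [Ideal.mem_span_pair]
      exact ⟨(-mono K w₂.darts (fun i => extendK (w.append w₂) κb (w.length + i)) (1)), (-1 : MvPolynomial G.edgeSet K), by rw [habin, hbbin, hcbin]; ring⟩
    · rw [hea] at habin; rw [if3, if4] at habin
      rw [heb] at hbbin; rw [if3, if4] at hbbin
      rw [hd2] at hcbin
      rw [Ideal.mem_span_pair]
      exact ⟨(-mono K w₂.darts (fun i => extendK (w.append w₂) κb (w.length + i)) (-1)), (1 : MvPolynomial G.edgeSet K), by rw [habin, hbbin, hcbin]; ring⟩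
    · rw [hea] at habin; rw [if3, if4] at habin
      rw [heb] at hbbin; rw [if3, if4] at hbbin
      rw [hd2] at hcbin
      simp only [neg_neg] at hcbin
      rw [Ideal.mem_span_pair]
      exact ⟨mono K w₂.darts (fun i => extendK (w.append w₂) κb (w.length + i)) (-1), (-1 : MvPolynomial G.edgeSet K), by rw [habin, hbbin, hcbin]; ring⟩
  by_cases hn0 : w₂.length = 0
  · have hE2nil : w₂.darts = [] := List.length_eq_zero_iff.mp (by omega)
    rw [hE2nil] at hbbin hcbin
    simp only [mono_nil, mul_one, one_mul] at hbbin hcbin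
    rcases Int.units_eq_one_or (extendK (w.append w₁) κa 0) with hea | hea <;>
      rcases Int.units_eq_one_or (extendK (w.append w₂) κb 0) with heb | heb <;>
      rcases Int.units_eq_one_or ((extendK (w₁.append w₂.reverse) κc 0 * extendK (w.append w₁) κa w.length)) with hd1 | hd1
    · rw [hea] at habin; rw [if1, if2] at habin
      rw [heb] at hbbin; rw [if1, if2] at hbbin
      rw [hd1] at hcbin
      rw [Ideal.mem_span_pair]
      exact ⟨(1 : MvPolynomial G.edgeSet K), (-mono K w₁.darts (fun i => extendK (w.append w₁) κa (w.length + i)) (1)), by rw [habin, hbbin, hcbin]; ring⟩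
    · rw [hea] at habin; rw [if1, if2] at habin
      rw [heb] at hbbin; rw [if1, if2] at hbbin
      rw [hd1] at hcbin
      simp only [neg_neg] at hcbin
      rw [Ideal.mem_span_pair]
      exact ⟨(-1 : MvPolynomial G.edgeSet K), mono K w₁.darts (fun i => extendK (w.append w₁) κa (w.length + i)) (1), by rw [habin, hbbin, hcbin]; ring⟩
    · rw [hea] at habin; rw [if1, if2] at habin
      rw [heb] at hbbin; rw [if3, if4] at hbbin
      rw [hd1] at hcbin
      rw [Ideal.mem_span_pair]
      exact ⟨(1 : MvPolynomial G.edgeSet K), mono K w₁.darts (fun i => extendK (w.append w₁) κa (w.length + i)) (1), by rw [habin, hbbin, hcbin]; ring⟩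
    · rw [hea] at habin; rw [if1, if2] at habin
      rw [heb] at hbbin; rw [if3, if4] at hbbin
      rw [hd1] at hcbin
      simp only [neg_neg] at hcbin
      rw [Ideal.mem_span_pair]
      exact ⟨(-1 : MvPolynomial G.edgeSet K), (-mono K w₁.darts (fun i => extendK (w.append w₁) κa (w.length + i)) (1)), by rw [habin, hbbin, hcbin]; ring⟩
    · rw [hea] at habin; rw [if3, if4] at habin
      rw [heb] at hbbin; rw [if1, if2] at hbbin
      rw [hd1] at hcbin
      rw [Ideal.mem_span_pair]
      exact ⟨(1 : MvPolynomial G.edgeSet K), mono K w₁.darts (fun i => extendK (w.append w₁) κa (w.length + i)) (-1), by rw [habin, hbbin, hcbin]; ring⟩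
    · rw [hea] at habin; rw [if3, if4] at habin
      rw [heb] at hbbin; rw [if1, if2] at hbbin
      rw [hd1] at hcbin
      simp only [neg_neg] at hcbin
      rw [Ideal.mem_span_pair]
      exact ⟨(-1 : MvPolynomial G.edgeSet K), (-mono K w₁.darts (fun i => extendK (w.append w₁) κa (w.length + i)) (-1)), by rw [habin, hbbin, hcbin]; ring⟩
    · rw [hea] at habin; rw [if3, if4] at habin
      rw [heb] at hbbin; rw [if3, if4] at hbbin
      rw [hd1] at hcbin
      rw [Ideal.mem_span_pair]
      exact ⟨(1 : MvPolynomial G.edgeSet K), (-mono K w₁.darts (fun i => extendK (w.append w₁) κa (w.length + i)) (-1)), by rw [habin, hbbin, hcbin]; ring⟩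
    · rw [hea] at habin; rw [if3, if4] at habin
      rw [heb] at hbbin; rw [if3, if4] at hbbin
      rw [hd1] at hcbin
      simp only [neg_neg] at hcbin
      rw [Ideal.mem_span_pair]
      exact ⟨(-1 : MvPolynomial G.edgeSet K), mono K w₁.darts (fun i => extendK (w.append w₁) κa (w.length + i)) (-1), by rw [habin, hbbin, hcbin]; ring⟩
  by_cases hl0 : w.length = 0
  · have hM1 : (∏ i : Fin w.darts.length, edgeVar K (w.darts.get i)) = (1 : MvPolynomial G.edgeSet K) := by
      have hz : w.darts.length = 0 := by omega
      haveI : IsEmpty (Fin w.darts.length) := by rw [hz]; infer_instance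
      simp [Finset.univ_eq_empty]
    rw [hM1] at habin hbbin
    simp only [ite_self, one_mul] at habin hbbin
    rcases Int.units_eq_one_or ((extendK (w₁.append w₂.reverse) κc 0 * extendK (w.append w₁) κa w.length)) with hd1 | hd1 <;>
      rcases Int.units_eq_one_or ((extendK (w₁.append w₂.reverse) κc w₁.length * extendK (w.append w₂) κb (w.length + (w₂.length - 1)))) with hd2 | hd2
    · rw [hd1, hd2] at hcbin
      rw [Ideal.mem_span_pair]
      exact ⟨mono K w₂.darts (fun i => extendK (w.append w₂) κb (w.length + i)) (1), mono K w₁.darts (fun i => extendK (w.append w₁) κa (w.length + i)) (-1), by rw [habin, hbbin, hcbin]; ring⟩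
    · rw [hd1, hd2] at hcbin
      simp only [neg_neg] at hcbin
      rw [Ideal.mem_span_pair]
      exact ⟨mono K w₂.darts (fun i => extendK (w.append w₂) κb (w.length + i)) (1), (-mono K w₁.darts (fun i => extendK (w.append w₁) κa (w.length + i)) (1)), by rw [habin, hbbin, hcbin]; ring⟩
    · rw [hd1, hd2] at hcbin
      simp only [neg_neg] at hcbin
      rw [Ideal.mem_span_pair]
      exact ⟨(-mono K w₂.darts (fun i => extendK (w.append w₂) κb (w.length + i)) (1)), mono K w₁.darts (fun i => extendK (w.append w₁) κa (w.length + i)) (1), by rw [habin, hbbin, hcbin]; ring⟩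
    · rw [hd1, hd2] at hcbin
      simp only [neg_neg] at hcbin
      rw [Ideal.mem_span_pair]
      exact ⟨(-mono K w₂.darts (fun i => extendK (w.append w₂) κb (w.length + i)) (1)), (-mono K w₁.darts (fun i => extendK (w.append w₁) κa (w.length + i)) (-1)), by rw [habin, hbbin, hcbin]; ring⟩
  · -- main case: all of w, w₁, w₂ nonempty
    have hJ := hJmain (by omega) (by omega) (by omega)
    rcases Int.units_eq_one_or (extendK (w.append w₁) κa 0) with hea | hea <;>
      rcases Int.units_eq_one_or (extendK (w.append w₂) κb 0) with heb | heb <;>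
      rcases Int.units_eq_one_or ((extendK (w₁.append w₂.reverse) κc 0 * extendK (w.append w₁) κa w.length)) with hd1 | hd1 <;>
      rcases Int.units_eq_one_or ((extendK (w₁.append w₂.reverse) κc w₁.length * extendK (w.append w₂) κb (w.length + (w₂.length - 1)))) with hd2 | hd2
    · rw [hea, heb, hd1, hd2] at hJ
      exact absurd hJ (by decide)
    · rw [hea] at habin; rw [if1, if2] at habin
      rw [heb] at hbbin; rw [if1, if2] at hbbin
      rw [hd1, hd2] at hcbin
      simp only [neg_neg] at hcbin
      rw [Ideal.mem_span_pair]
      exact ⟨mono K w₂.darts (fun i => extendK (w.append w₂) κb (w.length + i)) (1), (-mono K w₁.darts (fun i => extendK (w.append w₁) κa (w.length + i)) (1)), by rw [habin, hbbin, hcbin]; ring⟩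
    · rw [hea] at habin; rw [if1, if2] at habin
      rw [heb] at hbbin; rw [if1, if2] at hbbin
      rw [hd1, hd2] at hcbin
      simp only [neg_neg] at hcbin
      rw [Ideal.mem_span_pair]
      exact ⟨(-mono K w₂.darts (fun i => extendK (w.append w₂) κb (w.length + i)) (1)), mono K w₁.darts (fun i => extendK (w.append w₁) κa (w.length + i)) (1), by rw [habin, hbbin, hcbin]; ring⟩
    · rw [hea, heb, hd1, hd2] at hJ
      exact absurd hJ (by decide)
    · rw [hea] at habin; rw [if1, if2] at habin
      rw [heb] at hbbin; rw [if3, if4] at hbbin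
      rw [hd1, hd2] at hcbin
      rw [Ideal.mem_span_pair]
      exact ⟨mono K w₂.darts (fun i => extendK (w.append w₂) κb (w.length + i)) (-1), mono K w₁.darts (fun i => extendK (w.append w₁) κa (w.length + i)) (1), by rw [habin, hbbin, hcbin]; ring⟩
    · rw [hea, heb, hd1, hd2] at hJ
      exact absurd hJ (by decide)
    · rw [hea, heb, hd1, hd2] at hJ
      exact absurd hJ (by decide)
    · rw [hea] at habin; rw [if1, if2] at habin
      rw [heb] at hbbin; rw [if3, if4] at hbbin
      rw [hd1, hd2] at hcbin
      simp only [neg_neg] at hcbin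
      rw [Ideal.mem_span_pair]
      exact ⟨(-mono K w₂.darts (fun i => extendK (w.append w₂) κb (w.length + i)) (-1)), (-mono K w₁.darts (fun i => extendK (w.append w₁) κa (w.length + i)) (1)), by rw [habin, hbbin, hcbin]; ring⟩
    · rw [hea] at habin; rw [if3, if4] at habin
      rw [heb] at hbbin; rw [if1, if2] at hbbin
      rw [hd1, hd2] at hcbin
      rw [Ideal.mem_span_pair]
      exact ⟨mono K w₂.darts (fun i => extendK (w.append w₂) κb (w.length + i)) (1), mono K w₁.darts (fun i => extendK (w.append w₁) κa (w.length + i)) (-1), by rw [habin, hbbin, hcbin]; ring⟩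
    · rw [hea, heb, hd1, hd2] at hJ
      exact absurd hJ (by decide)
    · rw [hea, heb, hd1, hd2] at hJ
      exact absurd hJ (by decide)
    · rw [hea] at habin; rw [if3, if4] at habin
      rw [heb] at hbbin; rw [if1, if2] at hbbin
      rw [hd1, hd2] at hcbin
      simp only [neg_neg] at hcbin
      rw [Ideal.mem_span_pair]
      exact ⟨(-mono K w₂.darts (fun i => extendK (w.append w₂) κb (w.length + i)) (1)), (-mono K w₁.darts (fun i => extendK (w.append w₁) κa (w.length + i)) (-1)), by rw [habin, hbbin, hcbin]; ring⟩
    · rw [hea, heb, hd1, hd2] at hJ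
      exact absurd hJ (by decide)
    · rw [hea] at habin; rw [if3, if4] at habin
      rw [heb] at hbbin; rw [if3, if4] at hbbin
      rw [hd1, hd2] at hcbin
      simp only [neg_neg] at hcbin
      rw [Ideal.mem_span_pair]
      exact ⟨mono K w₂.darts (fun i => extendK (w.append w₂) κb (w.length + i)) (-1), (-mono K w₁.darts (fun i => extendK (w.append w₁) κa (w.length + i)) (-1)), by rw [habin, hbbin, hcbin]; ring⟩
    · rw [hea] at habin; rw [if3, if4] at habin
      rw [heb] at hbbin; rw [if3, if4] at hbbin
      rw [hd1, hd2] at hcbin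
      simp only [neg_neg] at hcbin
      rw [Ideal.mem_span_pair]
      exact ⟨(-mono K w₂.darts (fun i => extendK (w.append w₂) κb (w.length + i)) (-1)), mono K w₁.darts (fun i => extendK (w.append w₁) κa (w.length + i)) (-1), by rw [habin, hbbin, hcbin]; ring⟩
    · rw [hea, heb, hd1, hd2] at hJ
      exact absurd hJ (by decide)
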